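/- Assume condition (2.2) holds. Then for all t ≥ 0, ‖∫_0^t e^{(t−τ)A} B e^{τC} dτ‖_∞ ≤ (1 + 3e^{−rt})·2S/h. -/

import Mathlib

set_option linter.unusedSectionVars false

open NormedSpace


/-- Tridiagonal matrix with diagonal `α`, subdiagonal `β` and superdiagonal `γ`. -/
def tridiag {m : ℕ} (α β γ : Fin m → ℝ) : Matrix (Fin m) (Fin m) ℝ :=
  Matrix.of fun i j =>
    if (i : ℕ) = j then α i
    else if (i : ℕ) = (j : ℕ) + 1 then β i
    else if (j : ℕ) = (i : ℕ) + 1 then γ i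
    else 0

/-- The `(m+1)×2` matrix whose only nonzero entry is `g` in the bottom-left position. -/
def Bmat {m : ℕ} (g : ℝ) : Matrix (Fin (m + 1)) (Fin 2) ℝ :=
  Matrix.of fun i j => if i = Fin.last m ∧ j = 0 then g else 0

/-- The `2×2` matrix both of whose rows equal `(−rS/h, r·s_{m+1}/h)`. -/
noncomputable def Cmat (r spen S h : ℝ) : Matrix (Fin 2) (Fin 2) ℝ :=
  Matrix.of fun _ j => if j = 0 then -(r * S) / h else r * spen / h

/-- The maximum norm of a real matrix: `‖X‖_∞ = max_i Σ_j |X i j|`. -/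
noncomputable def matMaxNorm {ι κ : Type*} [Fintype ι] [Fintype κ]
    (X : Matrix ι κ ℝ) : ℝ :=
  ⨆ i, ∑ j, |X i j|

/-- The logarithmic maximum norm `μ_∞[X] = max_i ( x_{ii} + Σ_{j≠i} |x_{ij}| )`. -/
noncomputable def logMaxNorm {ι : Type*} [Fintype ι] [DecidableEq ι]
    (X : Matrix ι ι ℝ) : ℝ :=
  ⨆ i, (X i i + ∑ j ∈ Finset.univ.erase i, |X i j|)



open NormedSpace

section AuxNorm

attribute [local instance] Matrix.linftyOpNormedAddCommGroup Matrix.linftyOpNormedRing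
  Matrix.linftyOpNormedAlgebra

variable {n p q : Type*} [Fintype n] [DecidableEq n] [Fintype p] [DecidableEq p]
  [Fintype q] [DecidableEq q]

/-- row sums bound the linfty operator norm and vice versa -/
lemma rowsum_le_norm (X : Matrix n q ℝ) (i : n) : ∑ j, |X i j| ≤ ‖X‖ := by
  rw [Matrix.linfty_opNorm_def]
  have h1 : (∑ j, ‖X i j‖₊ : NNReal) ≤ (Finset.univ : Finset n).sup fun i => ∑ j, ‖X i j‖₊ :=
    Finset.le_sup (f := fun i => ∑ j, ‖X i j‖₊) (Finset.mem_univ i)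
  calc ∑ j, |X i j| = ((∑ j, ‖X i j‖₊ : NNReal) : ℝ) := by
        push_cast [Real.nnnorm_abs]
        simp [Real.norm_eq_abs]
      _ ≤ _ := by exact_mod_cast h1

lemma norm_le_of_rowsum (X : Matrix n q ℝ) (K : ℝ) (hK : 0 ≤ K)
    (h : ∀ i, ∑ j, |X i j| ≤ K) : ‖X‖ ≤ K := by
  rw [Matrix.linfty_opNorm_def]
  rw [show K = ((K.toNNReal : NNReal) : ℝ) by simp [hK]]
  norm_cast
  refine Finset.sup_le fun i _ => ?_
  have := h i
  have e : ∑ j, |X i j| = ((∑ j, ‖X i j‖₊ : NNReal) : ℝ) := by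
    push_cast
    simp [Real.norm_eq_abs]
  rw [e] at this
  exact_mod_cast this.trans (by simp [hK])

end AuxNorm

section AuxNorm2

attribute [local instance] Matrix.linftyOpNormedAddCommGroup Matrix.linftyOpNormedRing
  Matrix.linftyOpNormedAlgebra

variable {n p q : Type*} [Fintype n] [DecidableEq n] [Fintype p] [DecidableEq p]
  [Fintype q] [DecidableEq q]

lemma my_norm_exp_le {𝔸 : Type*} [NormedRing 𝔸] [NormedAlgebra ℝ 𝔸] [CompleteSpace 𝔸]
    [NormOneClass 𝔸] (x : 𝔸) : ‖exp x‖ ≤ Real.exp ‖x‖ := by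
  rw [exp_eq_tsum ℝ]
  refine (norm_tsum_le_tsum_norm (norm_expSeries_summable' x)).trans ?_
  rw [Real.exp_eq_exp_ℝ, exp_eq_tsum ℝ]
  refine Summable.tsum_le_tsum ?_ (norm_expSeries_summable' x) (expSeries_summable' (𝕂 := ℝ) ‖x‖)
  intro i
  rw [norm_smul, smul_eq_mul]
  have h1 : ‖((i.factorial : ℝ))⁻¹‖ = ((i.factorial : ℝ))⁻¹ := by
    rw [Real.norm_eq_abs, abs_of_nonneg (by positivity)]
  rw [h1]
  exact mul_le_mul_of_nonneg_left (norm_pow_le x i) (by positivity)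

lemma my_exp_smul_one {𝔸 : Type*} [NormedRing 𝔸] [NormedAlgebra ℝ 𝔸] [CompleteSpace 𝔸]
    (c : ℝ) : exp (c • (1 : 𝔸)) = Real.exp c • (1 : 𝔸) := by
  rw [exp_eq_tsum ℝ, Real.exp_eq_exp_ℝ, exp_eq_tsum ℝ]
  have : ∀ i : ℕ, (i.factorial⁻¹ : ℝ) • (c • (1:𝔸)) ^ i = ((i.factorial⁻¹ : ℝ) • c ^ i) • (1:𝔸) := by
    intro i
    rw [smul_pow, one_pow, smul_smul, smul_eq_mul]
  simp only []
  rw [tsum_congr this, Summable.tsum_smul_const (expSeries_summable' (𝕂 := ℝ) c)]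

end AuxNorm2

section AuxTwine

attribute [local instance] Matrix.linftyOpNormedAddCommGroup Matrix.linftyOpNormedRing
  Matrix.linftyOpNormedAlgebra

variable {n p q : Type*} [Fintype n] [DecidableEq n] [Fintype p] [DecidableEq p]
  [Fintype q] [DecidableEq q]

lemma my_intertwine (E : Matrix p q ℝ) (X : Matrix q q ℝ) (Y : Matrix p p ℝ)
    (h : E * X = Y * E) : E * exp X = exp Y * E := by
  have hn : ∀ k : ℕ, E * X ^ k = Y ^ k * E := by
    intro k; induction k with
    | zero => simp
    | succ k ih =>
      rw [pow_succ, ← Matrix.mul_assoc, ih, Matrix.mul_assoc, h, ← Matrix.mul_assoc, ← pow_succ]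
  let L : Matrix q q ℝ →L[ℝ] Matrix p q ℝ :=
    LinearMap.toContinuousLinearMap
      { toFun := fun Z => E * Z
        map_add' := fun a b => by simp [Matrix.mul_add]
        map_smul' := fun c a => by simp [Matrix.mul_smul] }
  let R : Matrix p p ℝ →L[ℝ] Matrix p q ℝ :=
    LinearMap.toContinuousLinearMap
      { toFun := fun Z => Z * E
        map_add' := fun a b => by simp [Matrix.add_mul]
        map_smul' := fun c a => by simp [Matrix.smul_mul] }
  have hL : E * exp X = L (exp X) := rfl
  have hR : exp Y * E = R (exp Y) := rfl
  rw [hL, hR, exp_eq_tsum ℝ]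
  simp only []
  rw [L.map_tsum (expSeries_summable' (𝕂 := ℝ) X), exp_eq_tsum ℝ]
  simp only []
  rw [R.map_tsum (expSeries_summable' (𝕂 := ℝ) Y)]
  congr 1; funext k
  show L ((k.factorial⁻¹ : ℝ) • X ^ k) = R ((k.factorial⁻¹ : ℝ) • Y ^ k)
  rw [map_smul, map_smul]
  show (k.factorial⁻¹ : ℝ) • (E * X ^ k) = (k.factorial⁻¹ : ℝ) • (Y ^ k * E)
  rw [hn k]

lemma my_varconst (P Q : Matrix n n ℝ) (t : ℝ) :
    exp (t • Q) = exp (t • P) +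
      ∫ τ in (0:ℝ)..t, exp ((t - τ) • P) * (Q - P) * exp (τ • Q) := by
  have key : ∀ τ : ℝ, HasDerivAt (fun σ : ℝ => exp ((t - σ) • P) * exp (σ • Q))
      (exp ((t - τ) • P) * (Q - P) * exp (τ • Q)) τ := by
    intro τ
    have h0 : HasDerivAt (fun σ : ℝ => t - σ) (-1) τ := (hasDerivAt_id τ).const_sub t
    have h1' : HasDerivAt (fun σ : ℝ => exp ((t - σ) • P))
        ((-1 : ℝ) • (P * exp ((t - τ) • P))) τ :=
      HasDerivAt.scomp τ (hasDerivAt_exp_smul_const' (𝕂 := ℝ) P (t - τ)) h0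
    have h1 : HasDerivAt (fun σ : ℝ => exp ((t - σ) • P))
        (-(P * exp ((t - τ) • P))) τ := by
      convert h1' using 1; simp
    have h2 : HasDerivAt (fun σ : ℝ => exp (σ • Q)) (exp (τ • Q) * Q) τ :=
      hasDerivAt_exp_smul_const (𝕂 := ℝ) Q τ
    have hmul := h1.mul h2
    refine HasDerivAt.congr_deriv hmul ?_
    have c1 : P * exp ((t - τ) • P) = exp ((t - τ) • P) * P :=
      ((Commute.refl P).smul_right (t - τ)).exp_right |>.eq
    have c2 : exp (τ • Q) * Q = Q * exp (τ • Q) :=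
      (((Commute.refl Q).smul_left τ).exp_left).eq
    rw [c1, c2]
    noncomm_ring
  have cont : Continuous fun τ : ℝ => exp ((t - τ) • P) * (Q - P) * exp (τ • Q) := by
    have e1 : Continuous fun τ : ℝ => exp ((t - τ) • P) :=
      exp_continuous.comp ((continuous_const.sub continuous_id).smul continuous_const)
    have e2 : Continuous fun τ : ℝ => exp (τ • Q) :=
      exp_continuous.comp (continuous_id.smul continuous_const)
    exact (e1.mul continuous_const).mul e2
  have ftc := intervalIntegral.integral_eq_sub_of_hasDerivAt
    (f := fun σ : ℝ => exp ((t - σ) • P) * exp (σ • Q))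
    (fun τ _ => key τ) (cont.intervalIntegrable 0 t)
  rw [ftc]
  simp [exp_zero]

section AuxBound
set_option maxHeartbeats 1000000

attribute [local instance] Matrix.linftyOpNormedAddCommGroup Matrix.linftyOpNormedRing
  Matrix.linftyOpNormedAlgebra Matrix.linfty_opNormOneClass

variable {n : Type*} [Fintype n] [DecidableEq n]

lemma my_exp_rowsum_le [Nonempty n] (M : Matrix n n ℝ) (ρ : ℝ)
    (h : ∀ i, M i i + ∑ j ∈ Finset.univ.erase i, |M i j| ≤ -ρ)
    {t : ℝ} (ht : 0 ≤ t) (i : n) :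
    ∑ j, |exp (t • M) i j| ≤ Real.exp (-(ρ * t)) := by
  obtain ⟨c, hc⟩ : ∃ c : ℝ, ∀ i, -M i i ≤ c :=
    ⟨Finset.univ.sup' Finset.univ_nonempty (fun i => -M i i),
      fun i => Finset.le_sup' (fun i => -M i i) (Finset.mem_univ i)⟩
  set P := M + c • (1 : Matrix n n ℝ) with hP
  have hProw : ∀ i, ∑ j, |P i j| ≤ c - ρ := by
    intro i
    have hsplit : ∑ j, |P i j| = |P i i| + ∑ j ∈ Finset.univ.erase i, |P i j| :=
      (Finset.add_sum_erase _ _ (Finset.mem_univ i)).symm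
    have hPii : P i i = M i i + c := by
      simp [hP, Matrix.one_apply]
    have hoff : ∀ j ∈ Finset.univ.erase i, |P i j| = |M i j| := by
      intro j hj
      have hji : i ≠ j := fun e => (Finset.mem_erase.mp hj).1 e.symm
      simp [hP, Matrix.one_apply_ne hji]
    rw [hsplit, Finset.sum_congr rfl hoff, hPii,
      abs_of_nonneg (by linarith [hc i])]
    have := h i
    linarith
  have hcρ : (0:ℝ) ≤ c - ρ := by
    have h0 : (0:ℝ) ≤ ∑ j, |P i j| := Finset.sum_nonneg fun _ _ => abs_nonneg _
    linarith [hProw i]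
  have hPnorm : ‖P‖ ≤ c - ρ := norm_le_of_rowsum P _ hcρ hProw
  have hsplit : t • M = (-(t*c)) • (1 : Matrix n n ℝ) + t • P := by
    rw [hP, smul_add, smul_smul]
    simp [neg_smul]
  have hcomm : Commute ((-(t*c)) • (1 : Matrix n n ℝ)) (t • P) :=
    ((Commute.one_left (t • P)).smul_left _)
  have hexp : exp (t • M) = Real.exp (-(t*c)) • exp (t • P) := by
    rw [hsplit, Matrix.exp_add_of_commute _ _ hcomm]
    erw [my_exp_smul_one]
    rw [ smul_mul_assoc, one_mul]
  have hnormexp : ‖exp (t • P)‖ ≤ Real.exp (t * (c - ρ)) := by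
    refine (my_norm_exp_le _).trans ?_
    refine Real.exp_le_exp.mpr ?_
    rw [norm_smul, Real.norm_eq_abs, abs_of_nonneg ht]
    exact mul_le_mul_of_nonneg_left hPnorm ht
  calc ∑ j, |exp (t • M) i j|
      = Real.exp (-(t*c)) * ∑ j, |exp (t • P) i j| := by
        rw [hexp, Finset.mul_sum]
        refine Finset.sum_congr rfl fun j _ => ?_
        rw [Matrix.smul_apply, smul_eq_mul, abs_mul, abs_of_pos (Real.exp_pos _)]
    _ ≤ Real.exp (-(t*c)) * Real.exp (t * (c - ρ)) := by
        refine mul_le_mul_of_nonneg_left ?_ (Real.exp_pos _).le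
        exact (rowsum_le_norm _ i).trans hnormexp
    _ = Real.exp (-(ρ * t)) := by
        rw [← Real.exp_add]; ring_nf

lemma my_exp_idem (Q : Matrix n n ℝ) (hQ : Q * Q = Q) (x : ℝ) :
    exp (x • Q) = 1 + (Real.exp x - 1) • Q := by
  have hpow : ∀ k : ℕ, (x • Q) ^ (k + 1) = (x ^ (k + 1)) • Q := by
    intro k; induction k with
    | zero => simp
    | succ k ih =>
      rw [pow_succ, ih, Matrix.smul_mul, Matrix.mul_smul, hQ, smul_smul, ← pow_succ]
  have hsum : Summable fun k : ℕ => ((k+1).factorial⁻¹ : ℝ) * x ^ (k+1) := by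
    have := expSeries_summable' (𝕂 := ℝ) (𝔸 := ℝ) x
    simp only [smul_eq_mul] at this
    exact (summable_nat_add_iff (f := fun k : ℕ => ((k).factorial⁻¹ : ℝ) * x ^ k) 1).mpr this
  have hreal : ∑' k : ℕ, ((k+1).factorial⁻¹ : ℝ) * x ^ (k+1) = Real.exp x - 1 := by
    have hx : Real.exp x = ∑' k : ℕ, ((k).factorial⁻¹ : ℝ) * x ^ k := by
      rw [Real.exp_eq_exp_ℝ, exp_eq_tsum ℝ]
      simp [smul_eq_mul]
    have := Summable.tsum_eq_zero_add (f := fun k : ℕ => ((k).factorial⁻¹ : ℝ) * x ^ k) ?_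
    · rw [← hx] at this
      simp only [Nat.factorial_zero, pow_zero] at this
      rw [this]; norm_num
    · have := expSeries_summable' (𝕂 := ℝ) (𝔸 := ℝ) x
      simpa [smul_eq_mul] using this
  rw [exp_eq_tsum ℝ]
  simp only []
  erw [Summable.tsum_eq_zero_add (expSeries_summable' (𝕂 := ℝ) (x • Q))]
  congr 1
  · simp
  · have : ∀ k : ℕ, ((k+1).factorial⁻¹ : ℝ) • (x • Q) ^ (k+1)
        = (((k+1).factorial⁻¹ : ℝ) * x ^ (k+1)) • Q := by
      intro k; rw [hpow, smul_smul]
    erw [tsum_congr this, Summable.tsum_smul_const hsum, hreal]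

end AuxBound

section AuxKey

attribute [local instance] Matrix.linftyOpNormedAddCommGroup Matrix.linftyOpNormedRing
  Matrix.linftyOpNormedAlgebra Matrix.linfty_opNormOneClass

set_option maxHeartbeats 1000000

variable {n : Type*} [Fintype n] [DecidableEq n]

lemma my_exp_fromBlocks_tl (A : Matrix n n ℝ) (b : n → ℝ) (w : ℝ) (s : ℝ) :
    ∀ x : n ⊕ Unit, ∀ j : n,
      exp (s • (Matrix.fromBlocks A (Matrix.of fun i (_ : Unit) => b i) 0
        (Matrix.of fun _ _ => -w))) x (Sum.inl j) =
      (match x with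
       | Sum.inl i => exp (s • A) i j
       | Sum.inr _ => 0) := by
  set Mw := Matrix.fromBlocks A (Matrix.of fun i (_ : Unit) => b i) 0
        (Matrix.of fun _ _ => (-w : ℝ)) with hMw
  set E : Matrix (n ⊕ Unit) n ℝ := Matrix.of fun x j => if x = Sum.inl j then 1 else 0 with hE
  have h : E * (s • A) = (s • Mw) * E := by
    ext x j
    rcases x with i | u <;>
      simp [hE, hMw, Matrix.mul_apply, Fintype.sum_sum_type, Finset.sum_ite_eq,
        Matrix.fromBlocks_apply₁₁, Matrix.fromBlocks_apply₂₁, ite_mul, mul_comm]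
  have h2 := my_intertwine E (s • A) (s • Mw) h
  intro x j
  have := congrFun (congrFun h2 x) j
  rcases x with i | u <;>
    simpa [hE, Matrix.mul_apply, Fintype.sum_sum_type, Finset.sum_ite_eq, ite_mul,
      mul_ite] using this.symm

lemma my_exp_fromBlocks_br (A : Matrix n n ℝ) (b : n → ℝ) (w : ℝ) (s : ℝ) :
    ∀ u : Unit, ∀ x : n ⊕ Unit,
      exp (s • (Matrix.fromBlocks A (Matrix.of fun i (_ : Unit) => b i) 0
        (Matrix.of fun _ _ => -w))) (Sum.inr u) x =
      (if x = Sum.inr () then Real.exp (-(s * w)) else 0) := by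
  set Mw := Matrix.fromBlocks A (Matrix.of fun i (_ : Unit) => b i) 0
        (Matrix.of fun _ _ => (-w : ℝ)) with hMw
  set E : Matrix Unit (n ⊕ Unit) ℝ := Matrix.of fun _ x => if x = Sum.inr () then 1 else 0 with hE
  have h : E * (s • Mw) = ((-(s * w)) • (1 : Matrix Unit Unit ℝ)) * E := by
    ext u x
    rcases x with j | u' <;>
      simp [hE, hMw, Matrix.mul_apply, Fintype.sum_sum_type,
        Matrix.fromBlocks_apply₂₁, Matrix.fromBlocks_apply₂₂, Matrix.one_apply, mul_comm]
  have h2 := my_intertwine E (s • Mw) ((-(s * w)) • (1 : Matrix Unit Unit ℝ)) h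
  erw [my_exp_smul_one] at h2
  intro u x
  have := congrFun (congrFun h2 u) x
  simpa [hE, Matrix.mul_apply, Fintype.sum_sum_type, Matrix.one_apply, mul_ite, ite_mul,
    mul_comm] using this

lemma my_exp_fromBlocks_tr_zero (A : Matrix n n ℝ) (w : ℝ) (s : ℝ) (i : n) :
    exp (s • (Matrix.fromBlocks A (0 : Matrix n Unit ℝ) (0 : Matrix Unit n ℝ)
        (Matrix.of fun _ _ => (-w : ℝ)))) (Sum.inl i) (Sum.inr ()) = 0 := by
  set Pw := Matrix.fromBlocks A (0 : Matrix n Unit ℝ) (0 : Matrix Unit n ℝ)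
    (Matrix.of fun _ _ => (-w : ℝ)) with hPw
  set E : Matrix (n ⊕ Unit) Unit ℝ := Matrix.of fun x _ => if x = Sum.inr () then 1 else 0
    with hE
  have h : E * (s • ((-w) • (1 : Matrix Unit Unit ℝ))) = (s • Pw) * E := by
    ext x u
    rcases x with j | u' <;>
      simp [hE, hPw, Matrix.mul_apply, Fintype.sum_sum_type, Matrix.one_apply,
        Matrix.fromBlocks_apply₁₂, Matrix.fromBlocks_apply₂₂, mul_comm]
  have h2 := my_intertwine E (s • ((-w) • (1 : Matrix Unit Unit ℝ))) (s • Pw) h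
  have := congrFun (congrFun h2 (Sum.inl i)) ()
  simpa [hE, Matrix.mul_apply, Fintype.sum_sum_type, mul_ite, ite_mul] using this.symm

end AuxKey

section AuxKey2

attribute [local instance] Matrix.linftyOpNormedAddCommGroup Matrix.linftyOpNormedRing
  Matrix.linftyOpNormedAlgebra Matrix.linfty_opNormOneClass

set_option maxHeartbeats 1000000

variable {n : Type*} [Fintype n] [DecidableEq n]

lemma my_key_integral (A : Matrix n n ℝ) (b : n → ℝ) (w t : ℝ) (i : n) :
    exp (t • (Matrix.fromBlocks A (Matrix.of fun i (_ : Unit) => b i) (0 : Matrix Unit n ℝ)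
        (Matrix.of fun _ _ => -w))) (Sum.inl i) (Sum.inr ()) =
    ∫ τ in (0:ℝ)..t, (∑ l, exp ((t - τ) • A) i l * b l) * Real.exp (-(w * τ)) := by
  set Mw := Matrix.fromBlocks A (Matrix.of fun i (_ : Unit) => b i) (0 : Matrix Unit n ℝ)
        (Matrix.of fun _ _ => (-w : ℝ)) with hMw
  set Pw := Matrix.fromBlocks A (0 : Matrix n Unit ℝ) (0 : Matrix Unit n ℝ)
    (Matrix.of fun _ _ => (-w : ℝ)) with hPw
  have hvar := my_varconst Pw Mw t
  -- evaluation continuous linear map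
  let ev : Matrix (n ⊕ Unit) (n ⊕ Unit) ℝ →L[ℝ] ℝ :=
    LinearMap.toContinuousLinearMap
      { toFun := fun X => X (Sum.inl i) (Sum.inr ())
        map_add' := fun a b => rfl
        map_smul' := fun c a => rfl }
  have cont : Continuous fun τ : ℝ =>
      exp ((t - τ) • Pw) * (Mw - Pw) * exp (τ • Mw) := by
    have e1 : Continuous fun τ : ℝ => exp ((t - τ) • Pw) :=
      exp_continuous.comp ((continuous_const.sub continuous_id).smul continuous_const)
    have e2 : Continuous fun τ : ℝ => exp (τ • Mw) :=
      exp_continuous.comp (continuous_id.smul continuous_const)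
    exact (e1.mul continuous_const).mul e2
  have hint :=
    cont.intervalIntegrable (μ := MeasureTheory.volume) 0 t
  have hev := congrArg ev hvar
  rw [map_add] at hev
  erw [← ev.intervalIntegral_comp_comm hint] at hev
  have hPtr : ev (exp (t • Pw)) = 0 := my_exp_fromBlocks_tr_zero A w t i
  have hintegrand : ∀ τ : ℝ,
      ev (exp ((t - τ) • Pw) * (Mw - Pw) * exp (τ • Mw)) =
      (∑ l, exp ((t - τ) • A) i l * b l) * Real.exp (-(w * τ)) := by
    intro τ
    have hD : ∀ z y : n ⊕ Unit, (Mw - Pw) z y =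
        (match z, y with
         | Sum.inl l, Sum.inr _ => b l
         | _, _ => 0) := by
      intro z y
      rcases z with l | u <;> rcases y with j | u' <;>
        simp [hMw, hPw]
    have htl : ∀ l : n, exp ((t - τ) • Pw) (Sum.inl i) (Sum.inl l)
        = exp ((t - τ) • A) i l := by
      intro l
      have h0 : (0 : Matrix n Unit ℝ) = Matrix.of fun i (_ : Unit) => (0:ℝ) := rfl
      have := my_exp_fromBlocks_tl A (fun _ => (0:ℝ)) w (t - τ) (Sum.inl i) l
      rw [hPw, h0]
      exact this
    have hbr : ∀ x : n ⊕ Unit, exp (τ • Mw) x (Sum.inr ()) =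
        (match x with
         | Sum.inr _ => Real.exp (-(τ * w))
         | Sum.inl _ => (exp (τ • Mw) x (Sum.inr ()))) := by
      intro x
      rcases x with l | u
      · rfl
      · simpa using my_exp_fromBlocks_br A b w τ u (Sum.inr ())
    show (exp ((t - τ) • Pw) * (Mw - Pw) * exp (τ • Mw)) (Sum.inl i) (Sum.inr ()) = _
    rw [Matrix.mul_apply]
    rw [Fintype.sum_sum_type]
    have hcol : ∀ j : n, (exp ((t - τ) • Pw) * (Mw - Pw)) (Sum.inl i) (Sum.inl j) = 0 := by
      intro j
      rw [Matrix.mul_apply, Fintype.sum_sum_type]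
      simp [hD]
    have hcolr : (exp ((t - τ) • Pw) * (Mw - Pw)) (Sum.inl i) (Sum.inr ())
        = ∑ l, exp ((t - τ) • A) i l * b l := by
      rw [Matrix.mul_apply, Fintype.sum_sum_type]
      simp only [hD]
      simp [htl]
    simp only [hcol, hcolr]
    have hbrr : exp (τ • Mw) (Sum.inr ()) (Sum.inr ()) = Real.exp (-(τ * w)) := by
      simpa using my_exp_fromBlocks_br A b w τ () (Sum.inr ())
    simp [hbrr, mul_comm w τ]
  rw [hPtr, zero_add] at hev
  have hevx : exp (t • Mw) (Sum.inl i) (Sum.inr ()) = ev (exp (t • Mw)) := rfl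
  rw [hevx, hev]
  exact intervalIntegral.integral_congr fun τ _ => hintegrand τ

end AuxKey2

section AuxMore

attribute [local instance] Matrix.linftyOpNormedAddCommGroup Matrix.linftyOpNormedRing
  Matrix.linftyOpNormedAlgebra Matrix.linfty_opNormOneClass

set_option maxHeartbeats 1000000

variable {n : Type*} [Fintype n] [DecidableEq n]

lemma my_abs_le_rowsum {ι : Type*} [Fintype ι] (f : ι → ℝ) (j : ι) : |f j| ≤ ∑ y, |f y| :=
  Finset.single_le_sum (fun y _ => abs_nonneg (f y)) (Finset.mem_univ j)

lemma my_cont_entry (A : Matrix n n ℝ) (t : ℝ) (i l : n) :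
    Continuous fun τ : ℝ => exp ((t - τ) • A) i l := by
  have e1 : Continuous fun τ : ℝ => exp ((t - τ) • A) :=
    exp_continuous.comp ((continuous_const.sub continuous_id).smul continuous_const)
  exact (continuous_apply l).comp ((continuous_apply i).comp e1)

lemma my_aug_rows (A : Matrix n n ℝ) (b : n → ℝ) (w ρ : ℝ)
    (hrows : ∀ i, A i i + (∑ j ∈ Finset.univ.erase i, |A i j|) + |b i| ≤ -ρ)
    (hw : -w ≤ -ρ) :
    ∀ x : n ⊕ Unit,
      (Matrix.fromBlocks A (Matrix.of fun i (_ : Unit) => b i) (0 : Matrix Unit n ℝ)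
        (Matrix.of fun _ _ => -w)) x x
      + ∑ y ∈ Finset.univ.erase x,
          |(Matrix.fromBlocks A (Matrix.of fun i (_ : Unit) => b i) (0 : Matrix Unit n ℝ)
            (Matrix.of fun _ _ => -w)) x y| ≤ -ρ := by
  set Mw := Matrix.fromBlocks A (Matrix.of fun i (_ : Unit) => b i) (0 : Matrix Unit n ℝ)
      (Matrix.of fun _ _ => (-w : ℝ)) with hMw
  intro x
  rcases x with i | u
  · have e1 : (∑ y ∈ Finset.univ.erase (Sum.inl i), |Mw (Sum.inl i) y|) + |Mw (Sum.inl i) (Sum.inl i)|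
        = ∑ y, |Mw (Sum.inl i) y| :=
      Finset.sum_erase_add _ _ (Finset.mem_univ _)
    have e2 : (∑ j ∈ Finset.univ.erase i, |A i j|) + |A i i| = ∑ j, |A i j| :=
      Finset.sum_erase_add _ _ (Finset.mem_univ _)
    have e3 : ∑ y, |Mw (Sum.inl i) y| = (∑ j, |A i j|) + |b i| := by
      rw [Fintype.sum_sum_type]
      simp [hMw]
    have e4 : Mw (Sum.inl i) (Sum.inl i) = A i i := by simp [hMw]
    have := hrows i
    rw [e4] at e1
    linarith
  · have e0 : ∀ y ∈ Finset.univ.erase (Sum.inr u : n ⊕ Unit), |Mw (Sum.inr u) y| = 0 := by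
      intro y hy
      rcases y with j | u'
      · simp [hMw]
      · exact absurd rfl ((Finset.mem_erase.mp hy).1)
    rw [Finset.sum_congr rfl e0]
    have : Mw (Sum.inr u) (Sum.inr u) = -w := by simp [hMw]
    simp [this]
    linarith

end AuxMore


set_option maxHeartbeats 2000000 in
/-- Assume condition (2.2) holds (`rI + A` invertible, `μ_∞[rI + A] ≤ 0`, and
`r + α_m + |β_m| + |γ_m| ≤ 0`, with the convention `β_1 = 0` if `m = 1`).  Then for
all `t ≥ 0`, `‖∫_0^t e^{(t−τ)A} B e^{τC} dτ‖_∞ ≤ (1 + 3e^{−rt})·2S/h`. -/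
theorem statement7 (m : ℕ) (r spen S : ℝ) (hr : 0 < r) (hspen : 0 < spen) (hsS : spen < S)
    (α β γ : Fin (m + 1) → ℝ) (hconv : m = 0 → β 0 = 0)
    (A : Matrix (Fin (m + 1)) (Fin (m + 1)) ℝ) (hA : A = tridiag α β γ)
    (B : Matrix (Fin (m + 1)) (Fin 2) ℝ) (hB : B = Bmat (γ (Fin.last m)))
    (C : Matrix (Fin 2) (Fin 2) ℝ) (hC : C = Cmat r spen S (S - spen))
    (hinv : IsUnit (r • (1 : Matrix (Fin (m + 1)) (Fin (m + 1)) ℝ) + A).det)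
    (hmu : logMaxNorm (r • (1 : Matrix (Fin (m + 1)) (Fin (m + 1)) ℝ) + A) ≤ 0)
    (hrow : r + α (Fin.last m) + |β (Fin.last m)| + |γ (Fin.last m)| ≤ 0) :
    ∀ t : ℝ, 0 ≤ t →
      matMaxNorm (Matrix.of fun (i : Fin (m + 1)) (j : Fin 2) =>
          ∫ τ in (0:ℝ)..t,
            (NormedSpace.exp ((t - τ) • A) * B * NormedSpace.exp (τ • C)) i j) ≤
        (1 + 3 * Real.exp (-(r * t))) * (2 * S / (S - spen)) := by

  intro t ht
  have hh : (0:ℝ) < S - spen := by linarith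
  set γ0 := γ (Fin.last m) with hγ0
  set b : Fin (m+1) → ℝ := fun l => if l = Fin.last m then γ0 else 0 with hbdef
  -- per-row inequality from the logarithmic norm hypothesis
  have hrowA : ∀ i, A i i + ∑ j ∈ Finset.univ.erase i, |A i j| ≤ -r := by
    intro i
    set F : Fin (m+1) → ℝ := fun i =>
      (r • (1 : Matrix (Fin (m + 1)) (Fin (m + 1)) ℝ) + A) i i +
        ∑ j ∈ Finset.univ.erase i, |(r • (1 : Matrix (Fin (m + 1)) (Fin (m + 1)) ℝ) + A) i j|
      with hF
    have hbdd : BddAbove (Set.range F) := Set.Finite.bddAbove (Set.finite_range F)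
    have hFi : F i ≤ 0 := (le_ciSup hbdd i).trans hmu
    have hdiag : (r • (1 : Matrix (Fin (m + 1)) (Fin (m + 1)) ℝ) + A) i i = r + A i i := by
      simp [Matrix.one_apply]
    have hoff : ∀ j ∈ Finset.univ.erase i,
        |(r • (1 : Matrix (Fin (m + 1)) (Fin (m + 1)) ℝ) + A) i j| = |A i j| := by
      intro j hj
      have hij : i ≠ j := fun e => (Finset.mem_erase.mp hj).1 e.symm
      simp [Matrix.one_apply_ne hij]
    rw [hF] at hFi
    simp only [] at hFi
    rw [hdiag, Finset.sum_congr rfl hoff] at hFi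
    linarith
  -- structure of the last row of A
  have hAdiag : A (Fin.last m) (Fin.last m) = α (Fin.last m) := by
    rw [hA]; simp [tridiag]
  have hAlast : ∑ j ∈ Finset.univ.erase (Fin.last m), |A (Fin.last m) j| ≤ |β (Fin.last m)| := by
    rcases Nat.eq_zero_or_pos m with hm | hm
    · subst hm
      have : Finset.univ.erase (Fin.last 0) = (∅ : Finset (Fin 1)) := by decide
      rw [this]
      simp [abs_nonneg]
    · obtain ⟨k, rfl⟩ : ∃ k, m = k + 1 := ⟨m - 1, by omega⟩
      set j0 : Fin (k + 2) := ⟨k, by omega⟩ with hj0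
      have hterm : ∀ j ∈ Finset.univ.erase (Fin.last (k+1)),
          |A (Fin.last (k+1)) j| = if j = j0 then |β (Fin.last (k+1))| else 0 := by
        intro j hj
        have hjne : j ≠ Fin.last (k+1) := (Finset.mem_erase.mp hj).1
        have hjv : (j : ℕ) ≠ k + 1 := by
          intro hc
          exact hjne (Fin.ext hc)
        have hjlt := j.is_lt
        by_cases hjj : j = j0
        · rw [hjj, hA]
          simp [tridiag, hj0, Fin.val_last]
        · have hjval : (j : ℕ) ≠ k := by
            intro hc
            exact hjj (Fin.ext (by rw [hj0]; exact hc))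
          rw [hA]
          simp only [tridiag, Matrix.of_apply, Fin.val_last, if_neg hjj]
          rw [if_neg (by omega), if_neg (by omega), if_neg (by omega), abs_zero]
      rw [Finset.sum_congr rfl hterm]
      have hj0mem : j0 ∈ Finset.univ.erase (Fin.last (k+1)) := by
        refine Finset.mem_erase.mpr ⟨?_, Finset.mem_univ _⟩
        intro hc
        have : (k : ℕ) = k + 1 := by
          have := congrArg (fun x : Fin (k+2) => (x : ℕ)) hc
          simpa [hj0, Fin.last] using this
        omega
      rw [Finset.sum_ite_eq' _ j0 (fun _ => |β (Fin.last (k+1))|)]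
      simp [hj0mem]
  -- the combined row hypothesis for the augmented matrices
  have hrows : ∀ i, A i i + (∑ j ∈ Finset.univ.erase i, |A i j|) + |b i| ≤ -r := by
    intro i
    by_cases hi : i = Fin.last m
    · subst hi
      have hbi : b (Fin.last m) = γ0 := by simp [hbdef]
      rw [hbi, hAdiag]
      have := hrow
      linarith [hAlast]
    · have hbi : b i = 0 := by simp [hbdef, hi]
      rw [hbi]
      simpa using hrowA i
  -- bounds on the two auxiliary integrals via the augmented matrices
  have hu : ∀ i : Fin (m+1),
      |∫ τ in (0:ℝ)..t, (∑ l, exp ((t - τ) • A) i l * b l) * Real.exp (-(r * τ))|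
        ≤ Real.exp (-(r * t)) := by
    intro i
    rw [← my_key_integral A b r t i]
    have hrows' := my_aug_rows A b r r (fun i => hrows i) (le_refl _)
    have hsum := my_exp_rowsum_le _ r hrows' ht (Sum.inl i)
    refine le_trans ?_ hsum
    exact my_abs_le_rowsum _ (Sum.inr ())
  have hv : ∀ i : Fin (m+1),
      |∫ τ in (0:ℝ)..t, (∑ l, exp ((t - τ) • A) i l * b l) * Real.exp (-(0 * τ))|
        ≤ 1 := by
    intro i
    rw [← my_key_integral A b 0 t i]
    have hrows' : ∀ i, A i i + (∑ j ∈ Finset.univ.erase i, |A i j|) + |b i| ≤ -(0:ℝ) := by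
      intro i; have := hrows i; linarith
    have haug := my_aug_rows A b 0 0 hrows' (le_refl _)
    have hsum := my_exp_rowsum_le _ 0 haug ht (Sum.inl i)
    have h1 : Real.exp (-(0 * t)) = 1 := by norm_num
    rw [h1] at hsum
    refine le_trans ?_ hsum
    exact my_abs_le_rowsum _ (Sum.inr ())
  -- simplify the inner sum
  have hbsum : ∀ (X : Matrix (Fin (m+1)) (Fin (m+1)) ℝ) (i : Fin (m+1)),
      (∑ l, X i l * b l) = X i (Fin.last m) * γ0 := by
    intro X i
    rw [hbdef]
    simp [mul_ite, Finset.sum_ite_eq']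
  -- the matrix exponential of τ • C
  set Q : Matrix (Fin 2) (Fin 2) ℝ :=
    Matrix.of fun _ j => if j = 0 then S / (S - spen) else -(spen / (S - spen)) with hQdef
  have hQQ : Q * Q = Q := by
    ext i j
    rw [Matrix.mul_apply, Fin.sum_univ_two]
    fin_cases j <;>
      · simp [hQdef]
        field_simp
        ring
  have hCQ : ∀ τ : ℝ, τ • C = (-(r * τ)) • Q := by
    intro τ
    ext i j
    rw [hC]
    fin_cases j <;> simp [hQdef, Cmat] <;> ring
  have hEC : ∀ (τ : ℝ) (j : Fin 2), exp (τ • C) 0 j =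
      (if j = 0 then (1:ℝ) else 0) +
        (Real.exp (-(r * τ)) - 1) * (if j = 0 then S / (S - spen) else -(spen / (S - spen))) := by
    intro τ j
    rw [hCQ τ, my_exp_idem Q hQQ]
    fin_cases j <;> simp [hQdef, Matrix.one_apply]
  -- rewrite the integrand
  have hinteg : ∀ (τ : ℝ) (i : Fin (m+1)) (j : Fin 2),
      (exp ((t - τ) • A) * B * exp (τ • C)) i j =
        (exp ((t - τ) • A) i (Fin.last m) * γ0) *
          ((if j = 0 then (1:ℝ) else 0) +
            (Real.exp (-(r * τ)) - 1) * (if j = 0 then S / (S - spen) else -(spen / (S - spen)))) := by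
    intro τ i j
    have hXB : ∀ k : Fin 2, (exp ((t - τ) • A) * B) i k =
        exp ((t - τ) • A) i (Fin.last m) * (if k = 0 then γ0 else 0) := by
      intro k
      rw [hB, Matrix.mul_apply]
      by_cases hk : k = 0
      · subst hk
        simp [Bmat, mul_ite, Finset.sum_ite_eq']
      · simp [Bmat, hk]
    rw [Matrix.mul_apply, Fin.sum_univ_two, hXB, hXB, ← hEC]
    norm_num
  -- name the two basic integrals
  set gS : Fin (m+1) → ℝ → ℝ :=
    fun i τ => ∑ l, exp ((t - τ) • A) i l * b l with hgS
  have hcont : ∀ i, Continuous (gS i) := by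
    intro i
    apply continuous_finset_sum
    intro l _
    exact (my_cont_entry A t i l).mul continuous_const
  set uI : Fin (m+1) → ℝ := fun i => ∫ τ in (0:ℝ)..t, gS i τ * Real.exp (-(r * τ)) with huI
  set vI : Fin (m+1) → ℝ := fun i => ∫ τ in (0:ℝ)..t, gS i τ * Real.exp (-(0 * τ)) with hvI
  have huIb : ∀ i, |uI i| ≤ Real.exp (-(r * t)) := fun i => hu i
  have hvIb : ∀ i, |vI i| ≤ 1 := fun i => hv i
  have hiu : ∀ i, IntervalIntegrable (fun τ => gS i τ * Real.exp (-(r * τ)))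
      MeasureTheory.volume 0 t := fun i =>
    ((hcont i).mul (Real.continuous_exp.comp (by continuity))).intervalIntegrable 0 t
  have hiv : ∀ i, IntervalIntegrable (fun τ => gS i τ * Real.exp (-(0 * τ)))
      MeasureTheory.volume 0 t := fun i =>
    ((hcont i).mul (Real.continuous_exp.comp (by continuity))).intervalIntegrable 0 t
  have hne : S - spen ≠ 0 := ne_of_gt hh
  -- express the entries of the target matrix
  have hΦ0 : ∀ i : Fin (m+1),
      (∫ τ in (0:ℝ)..t, (exp ((t - τ) • A) * B * exp (τ • C)) i 0) =
        (-(spen / (S - spen))) * vI i + (S / (S - spen)) * uI i := by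
    intro i
    have hpt : ∀ τ ∈ Set.uIcc (0:ℝ) t,
        (exp ((t - τ) • A) * B * exp (τ • C)) i 0 =
        (-(spen / (S - spen))) * (gS i τ * Real.exp (-(0 * τ)))
          + (S / (S - spen)) * (gS i τ * Real.exp (-(r * τ))) := by
      intro τ _
      rw [hinteg τ i 0, hgS]
      simp only []
      rw [hbsum]
      have h0 : Real.exp (-(0 * τ)) = 1 := by norm_num
      rw [h0]
      norm_num
      field_simp
      ring
    rw [intervalIntegral.integral_congr hpt,
      intervalIntegral.integral_add (((hiv i).const_mul _)) (((hiu i).const_mul _)),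
      intervalIntegral.integral_const_mul, intervalIntegral.integral_const_mul]
  have hΦ1 : ∀ i : Fin (m+1),
      (∫ τ in (0:ℝ)..t, (exp ((t - τ) • A) * B * exp (τ • C)) i 1) =
        (spen / (S - spen)) * vI i + (-(spen / (S - spen))) * uI i := by
    intro i
    have hpt : ∀ τ ∈ Set.uIcc (0:ℝ) t,
        (exp ((t - τ) • A) * B * exp (τ • C)) i 1 =
        (spen / (S - spen)) * (gS i τ * Real.exp (-(0 * τ)))
          + (-(spen / (S - spen))) * (gS i τ * Real.exp (-(r * τ))) := by
      intro τ _
      rw [hinteg τ i 1, hgS]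
      simp only []
      rw [hbsum]
      have h0 : Real.exp (-(0 * τ)) = 1 := by norm_num
      rw [h0]
      norm_num
      ring
    rw [intervalIntegral.integral_congr hpt,
      intervalIntegral.integral_add (((hiv i).const_mul _)) (((hiu i).const_mul _)),
      intervalIntegral.integral_const_mul, intervalIntegral.integral_const_mul]
  -- final bound
  refine ciSup_le fun i => ?_
  rw [Fin.sum_univ_two]
  simp only [Matrix.of_apply]
  rw [hΦ0 i, hΦ1 i]
  set E := Real.exp (-(r * t)) with hE
  have hEpos : 0 < E := Real.exp_pos _
  have hc1 : (0:ℝ) ≤ spen / (S - spen) := div_nonneg hspen.le hh.le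
  have hc2 : (0:ℝ) ≤ S / (S - spen) := div_nonneg (by linarith) hh.le
  have h1 : |(-(spen / (S - spen))) * vI i + (S / (S - spen)) * uI i|
      ≤ (spen / (S - spen)) * 1 + (S / (S - spen)) * E := by
    refine (abs_add_le _ _).trans ?_
    rw [abs_mul, abs_mul]
    rw [abs_neg, abs_of_nonneg hc1, abs_of_nonneg hc2]
    gcongr
    · exact hvIb i
    · exact huIb i
  have h2 : |(spen / (S - spen)) * vI i + (-(spen / (S - spen))) * uI i|
      ≤ (spen / (S - spen)) * 1 + (spen / (S - spen)) * E := by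
    refine (abs_add_le _ _).trans ?_
    rw [abs_mul, abs_mul]
    rw [abs_neg, abs_of_nonneg hc1]
    gcongr
    · exact hvIb i
    · exact huIb i
  have key : (spen / (S - spen)) * 1 + (S / (S - spen)) * E
      + ((spen / (S - spen)) * 1 + (spen / (S - spen)) * E)
      ≤ (1 + 3 * E) * (2 * S / (S - spen)) := by
    rw [div_mul_eq_mul_div, div_mul_eq_mul_div, div_mul_eq_mul_div,
      ← add_div, ← add_div, ← add_div,
      show (1 + 3 * E) * (2 * S / (S - spen)) = ((1 + 3 * E) * (2 * S)) / (S - spen) by ring]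
    gcongr
    nlinarith [hEpos, hspen, hsS]
  calc |(-(spen / (S - spen))) * vI i + (S / (S - spen)) * uI i|
        + |(spen / (S - spen)) * vI i + (-(spen / (S - spen))) * uI i|
      ≤ (spen / (S - spen)) * 1 + (S / (S - spen)) * E
        + ((spen / (S - spen)) * 1 + (spen / (S - spen)) * E) := add_le_add h1 h2
    _ ≤ (1 + 3 * E) * (2 * S / (S - spen)) := key
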